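/- Let s ≥ 2 be an integer and set d = s³ + s² − s − 2, so d+1 = (s−1)(s+1)² = (s−1) + (s²−2s) + s³. Let 𝔅 be a family of s²-element subsets of {1, …, s³} with |𝔅| = s³ + s² + s such that |B₁ ∩ B₂| ∈ {0, s} for all distinct B₁, B₂ ∈ 𝔅. For each B ∈ 𝔅 let v_B ∈ H_d be the point whose i-th coordinate equals 1/(s+1) for i ∈ {1, …, s−1} ∪ {s² − s − 1 + j : j ∈ B} and equals −1/(s(s+1)) otherwise, and let 𝔅' = {v_B : B ∈ 𝔅}. Let x₀ ∈ H_d be the point whose first s² − s − 1 coordinates equal −1/(s+1) and whose last s³ coordinates equal 1/(s(s+1)). Then R_d ∪ 𝔅' ∪ {x₀} is a 2-distance set in H_d with exactly the two distances √2 and √(2(s−1)/s), and it has exactly 2s²(s+1) points. -/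

import Mathlib

noncomputable section

open scoped BigOperators Classical

/-- The set of Euclidean distances between distinct points of `X`. -/
def distSet {m : ℕ} (X : Set (EuclideanSpace ℝ (Fin m))) : Set ℝ :=
  {r | ∃ x ∈ X, ∃ y ∈ X, x ≠ y ∧ dist x y = r}

/-- `X` is a 2-distance set: exactly two distances occur between distinct points. -/
def IsTwoDistSet {m : ℕ} (X : Set (EuclideanSpace ℝ (Fin m))) : Prop :=
  (distSet X).ncard = 2

/-- The affine hyperplane `H_d = {x ∈ ℝ^{d+1} : ∑ x_i = 1}`. -/
def Hplane (d : ℕ) : Set (EuclideanSpace ℝ (Fin (d+1))) :=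
  {x | ∑ i, x i = 1}

/-- The regular simplex `R_d`: the standard basis vectors of `ℝ^{d+1}`. -/
def simplex (d : ℕ) : Set (EuclideanSpace ℝ (Fin (d+1))) :=
  Set.range (fun i => EuclideanSpace.single i (1:ℝ))

/-- The constant `c = (1 - (d+1-k)β)/(d+1)`. -/
def cval (d k : ℕ) (β : ℝ) : ℝ := (1 - ((d:ℝ) + 1 - (k:ℝ)) * β) / ((d:ℝ) + 1)

/-- The set `T_d(k,β)` of points of `H_d` all of whose coordinates lie in `{c, c+β}`,
with exactly `k` coordinates equal to `c`. -/
def Tset (d k : ℕ) (β : ℝ) : Set (EuclideanSpace ℝ (Fin (d+1))) :=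
  {x | x ∈ Hplane d ∧ (∀ i, x i = cval d k β ∨ x i = cval d k β + β) ∧
    {i | x i = cval d k β}.ncard = k}

/-- The point `v_B ∈ H_d`, `d = s³+s²-s-2`, attached to a block `B ⊆ {1,…,s³}`:
its `i`-th coordinate (1-indexed) is `1/(s+1)` for `i ∈ {1,…,s-1} ∪ {s²-s-1+j : j ∈ B}`
and `-1/(s(s+1))` otherwise.  Coordinates here are 0-indexed, and a block element
`j : Fin (s³)` stands for the point `j+1 ∈ {1,…,s³}`. -/
def designVec (s : ℕ) (B : Finset (Fin (s^3))) :
    EuclideanSpace ℝ (Fin (s^3+s^2-s-2+1)) :=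
  WithLp.toLp 2 fun (i : Fin (s^3+s^2-s-2+1)) => if (i : ℕ) < s - 1 ∨ ∃ j ∈ B, (i : ℕ) = s^2 - s - 1 + (j : ℕ)
    then 1/((s:ℝ)+1) else -(1/((s:ℝ)*((s:ℝ)+1)))

/-- The point `x₀ ∈ H_d` whose first `s²-s-1` coordinates equal `-1/(s+1)` and whose
last `s³` coordinates equal `1/(s(s+1))`. -/
def x0vec (s : ℕ) : EuclideanSpace ℝ (Fin (s^3+s^2-s-2+1)) :=
  WithLp.toLp 2 fun (i : Fin (s^3+s^2-s-2+1)) => if (i : ℕ) < s^2 - s - 1 then -(1/((s:ℝ)+1)) else 1/((s:ℝ)*((s:ℝ)+1))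

lemma card_filter_lt (n m : ℕ) (h : m ≤ n) :
    (Finset.univ.filter fun i : Fin n => (i:ℕ) < m).card = m := by
  have e : (Finset.univ.filter fun i : Fin n => (i:ℕ) < m)
      = (Finset.range m).attachFin (fun x hx => lt_of_lt_of_le (Finset.mem_range.mp hx) h) := by
    ext i; simp [Finset.mem_attachFin]
  rw [e, Finset.card_attachFin, Finset.card_range]

lemma blockEmb_lt (s j : ℕ) (hj : j < s^3) : s^2-s-1+j < s^3+s^2-s-2+1 := by
  rcases Nat.lt_or_ge s 2 with h | h
  · interval_cases s <;> omega
  · have key : ∀ A B : ℕ, s+1 ≤ B → j < A → B-s-1+j < A+B-s-2+1 := by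
      intro A B h1 h2; omega
    exact key (s^3) (s^2) (by nlinarith) hj

def blockEmb (s : ℕ) : Fin (s^3) ↪ Fin (s^3+s^2-s-2+1) :=
  ⟨fun j => ⟨s^2-s-1+(j:ℕ), blockEmb_lt s j j.2⟩, by
    intro a b hab
    apply Fin.ext
    have h2 : s^2-s-1+(a:ℕ) = s^2-s-1+(b:ℕ) := congrArg Fin.val hab
    omega⟩

def Fpart (s : ℕ) : Finset (Fin (s^3+s^2-s-2+1)) :=
  Finset.univ.filter fun i => (i:ℕ) < s-1

def S0set (s : ℕ) : Finset (Fin (s^3+s^2-s-2+1)) :=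
  Finset.univ.filter fun i => (i:ℕ) < s^2-s-1

def SBset (s : ℕ) (B : Finset (Fin (s^3))) : Finset (Fin (s^3+s^2-s-2+1)) :=
  Finset.univ.filter fun i => (i:ℕ) < s-1 ∨ ∃ j ∈ B, (i:ℕ) = s^2-s-1+(j:ℕ)

lemma mem_SBset {s : ℕ} {B : Finset (Fin (s^3))} {i} :
    i ∈ SBset s B ↔ (i:ℕ) < s-1 ∨ ∃ j ∈ B, (i:ℕ) = s^2-s-1+(j:ℕ) := by
  simp [SBset]

lemma designVec_apply (s : ℕ) (B : Finset (Fin (s^3))) (i) :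
    designVec s B i = if i ∈ SBset s B then 1/((s:ℝ)+1) else -(1/((s:ℝ)*((s:ℝ)+1))) := by
  simp only [designVec, PiLp.toLp_apply, mem_SBset]

lemma x0vec_apply (s : ℕ) (i) :
    x0vec s i = if i ∈ S0set s then -(1/((s:ℝ)+1)) else 1/((s:ℝ)*((s:ℝ)+1)) := by
  simp only [x0vec, PiLp.toLp_apply, S0set, Finset.mem_filter, Finset.mem_univ, true_and]

lemma single_apply' {n : ℕ} (k i : Fin n) :
    EuclideanSpace.single k (1:ℝ) i = if i ∈ ({k} : Finset (Fin n)) then (1:ℝ) else 0 := by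
  simp [EuclideanSpace.single_apply]

lemma SBset_eq (s : ℕ) (B : Finset (Fin (s^3))) :
    SBset s B = Fpart s ∪ B.map (blockEmb s) := by
  ext i
  simp only [mem_SBset, Finset.mem_union, Fpart, Finset.mem_filter, Finset.mem_univ, true_and,
    Finset.mem_map, blockEmb, Function.Embedding.coeFn_mk, Fin.ext_iff]
  constructor
  · rintro (h | ⟨j, hj, he⟩)
    · exact Or.inl h
    · exact Or.inr ⟨j, hj, he.symm⟩
  · rintro (h | ⟨j, hj, he⟩)
    · exact Or.inl h
    · exact Or.inr ⟨j, hj, he.symm⟩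

lemma disj_Fpart_map (s : ℕ) (hs : 2 ≤ s) (B : Finset (Fin (s^3))) :
    Disjoint (Fpart s) (B.map (blockEmb s)) := by
  rw [Finset.disjoint_left]
  rintro i hi hm
  simp only [Fpart, Finset.mem_filter, Finset.mem_univ, true_and] at hi
  simp only [Finset.mem_map, blockEmb, Function.Embedding.coeFn_mk, Fin.ext_iff] at hm
  obtain ⟨j, hj, he⟩ := hm
  have key : ∀ B2 : ℕ, 2*s ≤ B2 → (i:ℕ) < s-1 → B2-s-1+(j:ℕ) = (i:ℕ) → False := by
    intro B2 h1 h2 h3; omega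
  exact key (s^2) (by nlinarith) hi he

lemma card_Fpart (s : ℕ) (hs : 2 ≤ s) : (Fpart s).card = s - 1 := by
  apply card_filter_lt
  have key : ∀ A B : ℕ, 2*s ≤ B → 1 ≤ A → s-1 ≤ A+B-s-2+1 := by
    intro A B h1 h2; omega
  exact key (s^3) (s^2) (by nlinarith) (Nat.one_le_pow 3 s (by omega))

lemma card_S0set (s : ℕ) (hs : 2 ≤ s) : (S0set s).card = s^2 - s - 1 := by
  apply card_filter_lt
  have key : ∀ A B : ℕ, s+1 ≤ B → 1 ≤ A → B-s-1 ≤ A+B-s-2+1 := by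
    intro A B h1 h2; omega
  exact key (s^3) (s^2) (by nlinarith) (Nat.one_le_pow 3 s (by omega))

lemma card_SBset (s : ℕ) (hs : 2 ≤ s) (B : Finset (Fin (s^3))) :
    (SBset s B).card = s - 1 + B.card := by
  rw [SBset_eq, Finset.card_union_of_disjoint (disj_Fpart_map s hs B), card_Fpart s hs,
    Finset.card_map]

lemma SBset_inter (s : ℕ) (B B' : Finset (Fin (s^3))) :
    SBset s B ∩ SBset s B' = Fpart s ∪ (B ∩ B').map (blockEmb s) := by
  rw [SBset_eq, SBset_eq]
  ext i
  simp only [Finset.mem_inter, Finset.mem_union, Finset.mem_map]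
  constructor
  · rintro ⟨(h | ⟨j, hj, he⟩), (h' | ⟨j', hj', he'⟩)⟩
    · exact Or.inl h
    · exact Or.inl h
    · exact Or.inl h'
    · have hjj : j = j' := (blockEmb s).injective (he.trans he'.symm)
      exact Or.inr ⟨j, ⟨hj, hjj ▸ hj'⟩, he⟩
  · rintro (h | ⟨j, hj, he⟩)
    · exact ⟨Or.inl h, Or.inl h⟩
    · obtain ⟨h1, h2⟩ := hj
      exact ⟨Or.inr ⟨j, h1, he⟩, Or.inr ⟨j, h2, he⟩⟩

lemma card_SBset_inter (s : ℕ) (hs : 2 ≤ s) (B B' : Finset (Fin (s^3))) :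
    (SBset s B ∩ SBset s B').card = s - 1 + (B ∩ B').card := by
  rw [SBset_inter, Finset.card_union_of_disjoint (disj_Fpart_map s hs _), card_Fpart s hs,
    Finset.card_map]

lemma SBset_inter_S0 (s : ℕ) (hs : 2 ≤ s) (B : Finset (Fin (s^3))) :
    SBset s B ∩ S0set s = Fpart s := by
  ext i
  simp only [Finset.mem_inter, mem_SBset, S0set, Fpart, Finset.mem_filter, Finset.mem_univ,
    true_and]
  have key : ∀ B2 : ℕ, 2*s ≤ B2 →
      (((i:ℕ) < s-1 ∨ ∃ j ∈ B, (i:ℕ) = B2-s-1+(j:ℕ)) ∧ (i:ℕ) < B2-s-1 ↔ (i:ℕ) < s-1) := by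
    intro B2 h1
    constructor
    · rintro ⟨(h | ⟨j, hj, he⟩), h0⟩
      · exact h
      · exfalso; omega
    · intro h
      exact ⟨Or.inl h, by omega⟩
  exact key (s^2) (by nlinarith)

-- ===== sum helpers =====
lemma sum_if_two {n : ℕ} (S : Finset (Fin n)) (u w : ℝ) :
    ∑ i : Fin n, (if i ∈ S then u else w) = (S.card : ℝ) * u + ((n:ℝ) - S.card) * w := by
  have h : ∀ i : Fin n, (if i ∈ S then u else w) = w + (if i ∈ S then u - w else 0) := by
    intro i; by_cases hi : i ∈ S <;> simp [hi]
  rw [Finset.sum_congr rfl fun i _ => h i, Finset.sum_add_distrib]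
  simp [Finset.sum_ite_mem, Finset.card_univ, mul_comm]
  ring

lemma sum_sq_split {n : ℕ} (S T : Finset (Fin n)) (u w u' w' : ℝ) :
    ∑ i : Fin n, ((if i ∈ S then u else w) - (if i ∈ T then u' else w'))^2
    = ((S ∩ T).card : ℝ) * (u-u')^2 + ((S.card : ℝ) - (S ∩ T).card) * (u-w')^2
      + ((T.card : ℝ) - (S ∩ T).card) * (w-u')^2
      + (((n:ℝ) - S.card - T.card) + (S ∩ T).card) * (w-w')^2 := by
  have h : ∀ i : Fin n, ((if i ∈ S then u else w) - (if i ∈ T then u' else w'))^2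
      = (if i ∈ S ∩ T then (u-u')^2 else 0) + (if i ∈ S \ T then (u-w')^2 else 0)
        + (if i ∈ T \ S then (w-u')^2 else 0) + (if i ∈ (S ∪ T)ᶜ then (w-w')^2 else 0) := by
    intro i
    by_cases hS : i ∈ S <;> by_cases hT : i ∈ T <;>
      simp [hS, hT, Finset.mem_sdiff, Finset.mem_inter, Finset.mem_compl]
  rw [Finset.sum_congr rfl fun i _ => h i]
  rw [Finset.sum_add_distrib, Finset.sum_add_distrib, Finset.sum_add_distrib]
  simp only [Finset.sum_ite_mem, Finset.univ_inter, Finset.sum_const, nsmul_eq_mul]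
  have h1 : ((S \ T).card : ℝ) = (S.card : ℝ) - (S ∩ T).card := by
    have := Finset.card_inter_add_card_sdiff S T
    push_cast [← this]; ring
  have h2 : ((T \ S).card : ℝ) = (T.card : ℝ) - (S ∩ T).card := by
    have := Finset.card_inter_add_card_sdiff T S
    rw [Finset.inter_comm] at this
    push_cast [← this]; ring
  have h3 : (((S ∪ T)ᶜ).card : ℝ) = ((n:ℝ) - S.card - T.card) + (S ∩ T).card := by
    have hc : ((S ∪ T)ᶜ).card = n - (S ∪ T).card := by
      rw [Finset.card_compl]; simp
    have hle : (S ∪ T).card ≤ n := by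
      simpa using Finset.card_le_univ (S ∪ T)
    have hu := Finset.card_union_add_card_inter S T
    have e1 : (((S ∪ T)ᶜ).card : ℝ) = (n : ℝ) - (S ∪ T).card := by
      rw [hc]; push_cast [Nat.cast_sub hle]; ring
    rw [e1]
    have e2 : ((S ∪ T).card : ℝ) = (S.card : ℝ) + T.card - (S ∩ T).card := by
      have hcast : ((S ∪ T).card : ℝ) + (S ∩ T).card = (S.card : ℝ) + T.card := by
        exact_mod_cast hu
      linarith
    rw [e2]; ring
  rw [h1, h2, h3]

-- ===== cast lemmas =====
lemma cast_nn (s : ℕ) (hs : 2 ≤ s) :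
    ((s^3+s^2-s-2+1 : ℕ) : ℝ) = (s:ℝ)^3 + (s:ℝ)^2 - (s:ℝ) - 1 := by
  have key : ∀ A B : ℕ, s + 2 ≤ A + B → A+B-s-2+1 = A+B - (s+1) := by
    intro A B h; omega
  rw [key (s^3) (s^2) (by nlinarith)]
  rw [Nat.cast_sub (by nlinarith)]
  push_cast; ring

lemma cast_s2 (s : ℕ) (hs : 2 ≤ s) : ((s^2 - s - 1 : ℕ) : ℝ) = (s:ℝ)^2 - (s:ℝ) - 1 := by
  have key : ∀ B : ℕ, s + 1 ≤ B → B-s-1 = B - (s+1) := by intro B h; omega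
  rw [key (s^2) (by nlinarith), Nat.cast_sub (by nlinarith)]
  push_cast; ring

lemma cast_s1 (s : ℕ) (hs : 2 ≤ s) : ((s - 1 : ℕ) : ℝ) = (s:ℝ) - 1 := by
  rw [Nat.cast_sub (by omega)]; simp

-- ===== distance formula =====
lemma dist_formula {n : ℕ} (x y : EuclideanSpace ℝ (Fin n)) :
    dist x y = Real.sqrt (∑ i, (x i - y i)^2) := by
  rw [EuclideanSpace.dist_eq]
  congr 1
  refine Finset.sum_congr rfl fun i _ => ?_
  rw [Real.dist_eq, sq_abs]

-- ===== squared sums =====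
section comp
variable {s : ℕ} (hs : 2 ≤ s)
include hs

lemma sR2 : (2:ℝ) ≤ (s:ℝ) := by exact_mod_cast hs
lemma sRpos : (0:ℝ) < (s:ℝ) := by have := sR2 hs; linarith
lemma sR1pos : (0:ℝ) < (s:ℝ) + 1 := by have := sR2 hs; linarith

lemma sq_ee {k l : Fin (s^3+s^2-s-2+1)} (hkl : k ≠ l) :
    ∑ i, (EuclideanSpace.single k (1:ℝ) i - EuclideanSpace.single l (1:ℝ) i)^2 = 2 := by
  simp only [single_apply']
  rw [sum_sq_split]
  rw [Finset.singleton_inter_of_notMem (by simp [hkl])]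
  simp
  norm_num

lemma sq_ev_mem {k : Fin (s^3+s^2-s-2+1)} {B : Finset (Fin (s^3))} (hB : B.card = s^2)
    (hk : k ∈ SBset s B) :
    ∑ i, (EuclideanSpace.single k (1:ℝ) i - designVec s B i)^2 = 2*((s:ℝ)-1)/(s:ℝ) := by
  have h0 := sRpos hs
  have h1 := sR1pos hs
  simp only [single_apply', designVec_apply]
  rw [sum_sq_split]
  rw [Finset.singleton_inter_of_mem hk, Finset.card_singleton, card_SBset s hs, hB,
    cast_nn s hs]
  push_cast [cast_s1 s hs]
  field_simp
  ring

lemma sq_ev_not_mem {k : Fin (s^3+s^2-s-2+1)} {B : Finset (Fin (s^3))} (hB : B.card = s^2)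
    (hk : k ∉ SBset s B) :
    ∑ i, (EuclideanSpace.single k (1:ℝ) i - designVec s B i)^2 = 2 := by
  have h0 := sRpos hs
  have h1 := sR1pos hs
  simp only [single_apply', designVec_apply]
  rw [sum_sq_split]
  rw [Finset.singleton_inter_of_notMem hk, Finset.card_empty, Finset.card_singleton, card_SBset s hs, hB,
    cast_nn s hs]
  push_cast [cast_s1 s hs]
  field_simp
  ring

lemma sq_ex_mem {k : Fin (s^3+s^2-s-2+1)} (hk : k ∈ S0set s) :
    ∑ i, (EuclideanSpace.single k (1:ℝ) i - x0vec s i)^2 = 2 := by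
  have h0 := sRpos hs
  have h1 := sR1pos hs
  simp only [single_apply', x0vec_apply]
  rw [sum_sq_split]
  rw [Finset.singleton_inter_of_mem hk, Finset.card_singleton, card_S0set s hs,
    cast_nn s hs, cast_s2 s hs]
  field_simp
  ring

lemma sq_ex_not_mem {k : Fin (s^3+s^2-s-2+1)} (hk : k ∉ S0set s) :
    ∑ i, (EuclideanSpace.single k (1:ℝ) i - x0vec s i)^2 = 2*((s:ℝ)-1)/(s:ℝ) := by
  have h0 := sRpos hs
  have h1 := sR1pos hs
  simp only [single_apply', x0vec_apply]
  rw [sum_sq_split]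
  rw [Finset.singleton_inter_of_notMem hk, Finset.card_empty, Finset.card_singleton, card_S0set s hs,
    cast_nn s hs, cast_s2 s hs]
  field_simp
  ring

lemma sq_vv_disj {B B' : Finset (Fin (s^3))} (hB : B.card = s^2) (hB' : B'.card = s^2)
    (hi : (B ∩ B').card = 0) :
    ∑ i, (designVec s B i - designVec s B' i)^2 = 2 := by
  have h0 := sRpos hs
  have h1 := sR1pos hs
  simp only [designVec_apply]
  rw [sum_sq_split]
  rw [card_SBset_inter s hs, hi, card_SBset s hs, card_SBset s hs, hB, hB',
    cast_nn s hs]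
  push_cast [cast_s1 s hs]
  field_simp
  ring

lemma sq_vv_s {B B' : Finset (Fin (s^3))} (hB : B.card = s^2) (hB' : B'.card = s^2)
    (hi : (B ∩ B').card = s) :
    ∑ i, (designVec s B i - designVec s B' i)^2 = 2*((s:ℝ)-1)/(s:ℝ) := by
  have h0 := sRpos hs
  have h1 := sR1pos hs
  simp only [designVec_apply]
  rw [sum_sq_split]
  rw [card_SBset_inter s hs, hi, card_SBset s hs, card_SBset s hs, hB, hB',
    cast_nn s hs]
  push_cast [cast_s1 s hs]
  field_simp
  ring

lemma sq_vx {B : Finset (Fin (s^3))} (hB : B.card = s^2) :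
    ∑ i, (designVec s B i - x0vec s i)^2 = 2*((s:ℝ)-1)/(s:ℝ) := by
  have h0 := sRpos hs
  have h1 := sR1pos hs
  simp only [designVec_apply, x0vec_apply]
  rw [sum_sq_split]
  rw [SBset_inter_S0 s hs, card_Fpart s hs, card_SBset s hs, hB, card_S0set s hs,
    cast_nn s hs, cast_s2 s hs]
  push_cast [cast_s1 s hs]
  field_simp
  ring

-- ===== hyperplane sums =====
lemma sum_designVec {B : Finset (Fin (s^3))} (hB : B.card = s^2) :
    ∑ i, designVec s B i = 1 := by
  have h0 := sRpos hs
  have h1 := sR1pos hs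
  simp only [designVec_apply]
  rw [sum_if_two]
  rw [card_SBset s hs, hB, cast_nn s hs]
  push_cast [cast_s1 s hs]
  field_simp
  ring

lemma sum_x0vec : ∑ i, x0vec s i = 1 := by
  have h0 := sRpos hs
  have h1 := sR1pos hs
  simp only [x0vec_apply]
  rw [sum_if_two]
  rw [card_S0set s hs, cast_nn s hs, cast_s2 s hs]
  field_simp
  ring

end comp

-- ===== dist-level lemmas =====
section distlem
variable {s : ℕ} (hs : 2 ≤ s)
include hs

local notation "D2" => Real.sqrt (2*((s:ℝ)-1)/(s:ℝ))

lemma D2sq_pos : 0 < 2*((s:ℝ)-1)/(s:ℝ) := by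
  have h0 := sRpos hs; have h2 := sR2 hs
  apply div_pos <;> linarith

lemma D2_pos : 0 < D2 := Real.sqrt_pos.mpr (D2sq_pos hs)

lemma D1_pos : 0 < Real.sqrt 2 := Real.sqrt_pos.mpr (by norm_num)

lemma D2_lt_D1 : D2 < Real.sqrt 2 := by
  have h0 := sRpos hs; have h2 := sR2 hs
  apply Real.sqrt_lt_sqrt (le_of_lt (D2sq_pos hs))
  rw [div_lt_iff₀ h0]; linarith

lemma dist_ee' {k l : Fin (s^3+s^2-s-2+1)} (hkl : k ≠ l) :
    dist (EuclideanSpace.single k (1:ℝ)) (EuclideanSpace.single l (1:ℝ)) = Real.sqrt 2 := by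
  rw [dist_formula, sq_ee hs hkl]

lemma dist_ev' {k : Fin (s^3+s^2-s-2+1)} {B : Finset (Fin (s^3))} (hB : B.card = s^2) :
    dist (EuclideanSpace.single k (1:ℝ)) (designVec s B) = Real.sqrt 2 ∨
    dist (EuclideanSpace.single k (1:ℝ)) (designVec s B) = D2 := by
  by_cases hk : k ∈ SBset s B
  · right; rw [dist_formula, sq_ev_mem hs hB hk]
  · left; rw [dist_formula, sq_ev_not_mem hs hB hk]

lemma dist_ex' {k : Fin (s^3+s^2-s-2+1)} :
    dist (EuclideanSpace.single k (1:ℝ)) (x0vec s) = Real.sqrt 2 ∨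
    dist (EuclideanSpace.single k (1:ℝ)) (x0vec s) = D2 := by
  by_cases hk : k ∈ S0set s
  · left; rw [dist_formula, sq_ex_mem hs hk]
  · right; rw [dist_formula, sq_ex_not_mem hs hk]

lemma dist_ex_out {k : Fin (s^3+s^2-s-2+1)} (hk : k ∉ S0set s) :
    dist (EuclideanSpace.single k (1:ℝ)) (x0vec s) = D2 := by
  rw [dist_formula, sq_ex_not_mem hs hk]

lemma dist_vv' {B B' : Finset (Fin (s^3))} (hB : B.card = s^2) (hB' : B'.card = s^2)
    (h01 : (B ∩ B').card = 0 ∨ (B ∩ B').card = s) :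
    dist (designVec s B) (designVec s B') = Real.sqrt 2 ∨
    dist (designVec s B) (designVec s B') = D2 := by
  rcases h01 with h | h
  · left; rw [dist_formula, sq_vv_disj hs hB hB' h]
  · right; rw [dist_formula, sq_vv_s hs hB hB' h]

lemma dist_vx' {B : Finset (Fin (s^3))} (hB : B.card = s^2) :
    dist (designVec s B) (x0vec s) = D2 := by
  rw [dist_formula, sq_vx hs hB]

lemma ne_of_dist12 {n : ℕ} {x y : EuclideanSpace ℝ (Fin n)}
    (h : dist x y = Real.sqrt 2 ∨ dist x y = D2) : x ≠ y := by
  rintro rfl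
  rw [dist_self] at h
  rcases h with h | h
  · exact absurd h.symm (ne_of_gt (D1_pos hs))
  · exact absurd h.symm (ne_of_gt (D2_pos hs))

lemma ne_ev {k : Fin (s^3+s^2-s-2+1)} {B : Finset (Fin (s^3))} (hB : B.card = s^2) :
    EuclideanSpace.single k (1:ℝ) ≠ designVec s B :=
  ne_of_dist12 hs (dist_ev' hs hB)

lemma ne_ex {k : Fin (s^3+s^2-s-2+1)} :
    EuclideanSpace.single k (1:ℝ) ≠ x0vec s :=
  ne_of_dist12 hs (dist_ex' hs)

lemma ne_vx {B : Finset (Fin (s^3))} (hB : B.card = s^2) :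
    designVec s B ≠ x0vec s :=
  ne_of_dist12 hs (Or.inr (dist_vx' hs hB))

lemma ne_vv {B B' : Finset (Fin (s^3))} (hB : B.card = s^2) (hB' : B'.card = s^2)
    (h01 : (B ∩ B').card = 0 ∨ (B ∩ B').card = s) :
    designVec s B ≠ designVec s B' :=
  ne_of_dist12 hs (dist_vv' hs hB hB' h01)

end distlem


theorem stmt12 (s : ℕ) (hs : 2 ≤ s) (𝔅 : Finset (Finset (Fin (s^3))))
    (hcard : 𝔅.card = s^3 + s^2 + s)
    (hblock : ∀ B ∈ 𝔅, B.card = s^2)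
    (hqs : ∀ B₁ ∈ 𝔅, ∀ B₂ ∈ 𝔅, B₁ ≠ B₂ →
      (B₁ ∩ B₂).card = 0 ∨ (B₁ ∩ B₂).card = s) :
    (simplex (s^3+s^2-s-2) ∪ designVec s '' ↑𝔅 ∪ {x0vec s}) ⊆ Hplane (s^3+s^2-s-2) ∧
    distSet (simplex (s^3+s^2-s-2) ∪ designVec s '' ↑𝔅 ∪ {x0vec s}) =
      {Real.sqrt 2, Real.sqrt (2*((s:ℝ)-1)/(s:ℝ))} ∧
    (simplex (s^3+s^2-s-2) ∪ designVec s '' ↑𝔅 ∪ {x0vec s}).ncard = 2*s^2*(s+1) := by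
  have hs3 : 1 ≤ s^3 := Nat.one_le_pow 3 s (by omega)
  have hs2s : 2*s ≤ s^2 := by nlinarith
  refine ⟨?_, ?_, ?_⟩
  · -- Hplane
    rintro x ((⟨k, rfl⟩ | ⟨B, hB, rfl⟩) | rfl)
    · show ∑ i, _ = 1
      simp [EuclideanSpace.single_apply]
    · exact sum_designVec hs (hblock B hB)
    · exact sum_x0vec hs
  · -- distSet
    have hpair : ∀ x ∈ (simplex (s^3+s^2-s-2) ∪ designVec s '' ↑𝔅 ∪ {x0vec s}),
        ∀ y ∈ (simplex (s^3+s^2-s-2) ∪ designVec s '' ↑𝔅 ∪ {x0vec s}), x ≠ y →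
        dist x y = Real.sqrt 2 ∨ dist x y = Real.sqrt (2*((s:ℝ)-1)/(s:ℝ)) := by
      rintro x ((⟨k, rfl⟩ | ⟨B, hB, rfl⟩) | rfl) y ((⟨l, rfl⟩ | ⟨B', hB', rfl⟩) | rfl) hxy
      · exact Or.inl (dist_ee' hs (fun h => hxy (by rw [h])))
      · exact dist_ev' hs (hblock B' hB')
      · exact dist_ex' hs
      · rw [dist_comm]; exact dist_ev' hs (hblock B hB)
      · exact dist_vv' hs (hblock B hB) (hblock B' hB')
          (hqs B hB B' hB' (fun h => hxy (by rw [h])))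
      · exact Or.inr (dist_vx' hs (hblock B hB))
      · rw [dist_comm]; exact dist_ex' hs
      · rw [dist_comm]; exact Or.inr (dist_vx' hs (hblock B' hB'))
      · exact absurd rfl hxy
    apply Set.Subset.antisymm
    · rintro r ⟨x, hx, y, hy, hxy, rfl⟩
      rcases hpair x hx y hy hxy with h | h <;> rw [h] <;> simp
    · have hlt1 : 1 < s^3+s^2-s-2+1 := by
        have key : ∀ A B : ℕ, 2*s ≤ B → 1 ≤ A → 1 < A+B-s-2+1 := by
          intro A B h1 h2; omega
        exact key _ _ hs2s hs3
      have hlt0 : 0 < s^3+s^2-s-2+1 := by omega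
      have hltk : s^2-s-1 < s^3+s^2-s-2+1 := by
        have key : ∀ A B : ℕ, 2*s ≤ B → 1 ≤ A → B-s-1 < A+B-s-2+1 := by
          intro A B h1 h2; omega
        exact key _ _ hs2s hs3
      rintro r (rfl | rfl)
      · refine ⟨EuclideanSpace.single (⟨0, hlt0⟩ : Fin (s^3+s^2-s-2+1)) (1:ℝ),
          Or.inl (Or.inl ⟨_, rfl⟩),
          EuclideanSpace.single (⟨1, hlt1⟩ : Fin (s^3+s^2-s-2+1)) (1:ℝ),
          Or.inl (Or.inl ⟨_, rfl⟩), ?_, ?_⟩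
        · exact ne_of_dist12 hs (Or.inl (dist_ee' hs (by simp [Fin.ext_iff])))
        · exact dist_ee' hs (by simp [Fin.ext_iff])
      · have hk : (⟨s^2-s-1, hltk⟩ : Fin (s^3+s^2-s-2+1)) ∉ S0set s := by
          simp [S0set]
        refine ⟨EuclideanSpace.single (⟨s^2-s-1, hltk⟩ : Fin (s^3+s^2-s-2+1)) (1:ℝ),
          Or.inl (Or.inl ⟨_, rfl⟩), x0vec s, Or.inr rfl, ?_, ?_⟩
        · exact ne_of_dist12 hs (Or.inr (dist_ex_out hs hk))
        · exact dist_ex_out hs hk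
  · -- ncard
    have hinj_e : Function.Injective
        (fun i : Fin (s^3+s^2-s-2+1) => EuclideanSpace.single i (1:ℝ)) := by
      intro i j h
      by_contra hne
      have h2 := congrArg (fun v : EuclideanSpace ℝ (Fin (s^3+s^2-s-2+1)) => v i) h
      simp [EuclideanSpace.single_apply, hne] at h2
    have h1 : (simplex (s^3+s^2-s-2)).ncard = s^3+s^2-s-2+1 := by
      rw [simplex, ← Set.image_univ, Set.ncard_image_of_injective _ hinj_e, Set.ncard_univ]
      simp
    have hinjOn : Set.InjOn (designVec s) ↑𝔅 := by
      intro B hB B' hB' h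
      by_contra hne
      exact ne_vv hs (hblock B hB) (hblock B' hB') (hqs B hB B' hB' hne) h
    have h2 : (designVec s '' ↑𝔅).ncard = s^3+s^2+s := by
      rw [Set.ncard_image_of_injOn hinjOn, Set.ncard_coe_finset, hcard]
    have hd1 : Disjoint (simplex (s^3+s^2-s-2)) (designVec s '' ↑𝔅) := by
      rw [Set.disjoint_left]
      rintro x ⟨k, rfl⟩ ⟨B, hB, he⟩
      exact ne_ev hs (hblock B hB) he.symm
    have hd2 : Disjoint (simplex (s^3+s^2-s-2) ∪ designVec s '' ↑𝔅) ({x0vec s} :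
        Set (EuclideanSpace ℝ (Fin (s^3+s^2-s-2+1)))) := by
      rw [Set.disjoint_right]
      rintro x rfl (⟨k, hk⟩ | ⟨B, hB, he⟩)
      · exact ne_ex hs hk
      · exact ne_vx hs (hblock B hB) he
    have hf1 : (simplex (s^3+s^2-s-2)).Finite := Set.finite_range _
    have hf2 : (designVec s '' ↑𝔅).Finite := (𝔅.finite_toSet).image _
    rw [Set.ncard_union_eq hd2 (hf1.union hf2) (Set.finite_singleton _),
      Set.ncard_union_eq hd1 hf1 hf2, h1, h2, Set.ncard_singleton]
    have key : ∀ A B : ℕ, 2*s ≤ B → 1 ≤ A → s + 2 ≤ A + B →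
        (A+B-s-2+1) + (A+B+s) + 1 = A+A+B+B := by
      intro A B h1 h2 h3; omega
    have e2 : 2*s^2*(s+1) = s^3+s^3+s^2+s^2 := by ring
    rw [e2]
    exact key _ _ hs2s hs3 (by nlinarith)
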